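/- For i ≠ j in [r], set β_{i,j} := w(T_i, S_j)/w(T_i). Then for every integer t with 0 ≤ t ≤ 1/α, ∑_{x∈T_i} √(w(x)) · (((1/2)·I_N + (1/2)·Ā)^t g_j)_x ≤ (t²·α² + t·β_{i,j})·w(T_i). -/

import Mathlib

open Finset Matrix

/-- The degree `w(x) = ∑_{x'} w(x,x')` of a vertex in the positive-pair graph. -/
noncomputable def deg {N : ℕ} (w : Fin N → Fin N → ℝ) (x : Fin N) : ℝ := ∑ x', w x x'

/-- The normalized adjacency matrix `Ā` with entries `w(x,x')/√(w(x)w(x'))`. -/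
noncomputable def nadj {N : ℕ} (w : Fin N → Fin N → ℝ) : Matrix (Fin N) (Fin N) ℝ :=
  Matrix.of fun x x' => w x x' / Real.sqrt (deg w x * deg w x')

/-- The vector with entry `√(w(x))` on a subset `A` and `0` elsewhere. -/
noncomputable def hvec {N : ℕ} (w : Fin N → Fin N → ℝ) (A : Finset (Fin N)) :
    Fin N → ℝ :=
  fun x => if x ∈ A then Real.sqrt (deg w x) else 0

/-- The lazy random-walk matrix `(1/2)·I + (1/2)·Ā`. -/
noncomputable def lazyA {N : ℕ} (w : Fin N → Fin N → ℝ) : Matrix (Fin N) (Fin N) ℝ :=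
  ((1 : ℝ) / 2) • (1 : Matrix (Fin N) (Fin N) ℝ) + ((1 : ℝ) / 2) • nadj w

namespace Stmt13Aux

variable {N : ℕ}

/-- The lazy random-walk (row-stochastic) matrix. -/
noncomputable def Pm (w : Fin N → Fin N → ℝ) : Matrix (Fin N) (Fin N) ℝ :=
  Matrix.of fun x y => (if x = y then (1:ℝ)/2 else 0) + w x y / (2 * deg w x)

/-- indicator vector of a finset -/
noncomputable def chi (A : Finset (Fin N)) : Fin N → ℝ := fun x => if x ∈ A then 1 else 0

lemma vecMul_apply (M : Matrix (Fin N) (Fin N) ℝ) (v : Fin N → ℝ) (x : Fin N) :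
    (v ᵥ* M) x = ∑ y, v y * M y x := by
  simp [Matrix.vecMul, dotProduct]

lemma dot_apply (v u : Fin N → ℝ) : v ⬝ᵥ u = ∑ y, v y * u y := rfl

lemma Pm_apply (w : Fin N → Fin N → ℝ) (x y : Fin N) :
    Pm w x y = (if x = y then (1:ℝ)/2 else 0) + w x y / (2 * deg w x) := rfl

lemma Pm_nonneg (w : Fin N → Fin N → ℝ) (hnonneg : ∀ x x', 0 ≤ w x x')
    (hdeg : ∀ x, 0 < deg w x) (x y : Fin N) : 0 ≤ Pm w x y := by
  rw [Pm_apply]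
  have h1 : (0:ℝ) ≤ if x = y then (1:ℝ)/2 else 0 := by positivity
  have h2 : (0:ℝ) ≤ w x y / (2 * deg w x) :=
    div_nonneg (hnonneg x y) (by have := hdeg x; linarith)
  linarith

lemma Pm_offdiag (w : Fin N → Fin N → ℝ) {x y : Fin N} (h : x ≠ y) :
    Pm w x y = w x y / (2 * deg w x) := by
  rw [Pm_apply, if_neg h, zero_add]

lemma Pm_rowsum (w : Fin N → Fin N → ℝ) (hdeg : ∀ x, 0 < deg w x) (x : Fin N) :
    ∑ y, Pm w x y = 1 := by
  have hx := (hdeg x).ne'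
  simp only [Pm_apply, Finset.sum_add_distrib]
  rw [Finset.sum_ite_eq Finset.univ x (fun _ => (1:ℝ)/2)]
  rw [← Finset.sum_div]
  have : ∑ y, w x y = deg w x := rfl
  rw [this]
  field_simp
  norm_num

/-- one-step bound for the row sum into a set `A` avoiding `y`. -/
lemma Pm_rowsum_into (w : Fin N → Fin N → ℝ) (hdeg : ∀ x, 0 < deg w x)
    {A : Finset (Fin N)} {y : Fin N} (hy : y ∉ A) :
    deg w y * ∑ z ∈ A, Pm w y z = (∑ z ∈ A, w y z) / 2 := by
  have hA : ∀ z ∈ A, Pm w y z = w y z / (2 * deg w y) := by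
    intro z hz
    exact Pm_offdiag w (fun h => hy (h ▸ hz))
  have hy' := (hdeg y).ne'
  rw [Finset.sum_congr rfl hA, ← Finset.sum_div]
  field_simp

/-- stationarity: `deg ᵥ* Pm = deg`. -/
lemma deg_stationary (w : Fin N → Fin N → ℝ) (hsymm : ∀ x x', w x x' = w x' x)
    (hdeg : ∀ x, 0 < deg w x) (x : Fin N) :
    ∑ y, deg w y * Pm w y x = deg w x := by
  have key : ∀ y, deg w y * Pm w y x =
      (if y = x then (deg w y)/2 else 0) + w y x / 2 := by
    intro y
    rw [Pm_apply, mul_add]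
    congr 1
    · split <;> ring
    · have hy := (hdeg y).ne'
      field_simp
  simp only [key, Finset.sum_add_distrib]
  rw [Finset.sum_ite_eq' Finset.univ x (fun y => deg w y / 2)]
  simp only [Finset.mem_univ, if_true, ← Finset.sum_div]
  have : ∑ y, w y x = deg w x := by
    rw [show (deg w x = ∑ y, w x y) from rfl]
    exact Finset.sum_congr rfl (fun y _ => hsymm y x)
  rw [this]
  ring

section Core

variable (w : Fin N → Fin N → ℝ) (Ct Cs : Finset (Fin N))

/-- mass of the walk started from `deg` restricted to `Ct`, killed on exiting `Ct`. -/
noncomputable def rho : ℕ → Fin N → ℝ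
  | 0 => fun x => if x ∈ Ct then deg w x else 0
  | s+1 => fun x => if x ∈ Ct then (rho s ᵥ* Pm w) x else 0

variable {w Ct Cs}
variable (hsymm : ∀ x x', w x x' = w x' x) (hnonneg : ∀ x x', 0 ≤ w x x')
  (hdeg : ∀ x, 0 < deg w x)

include hnonneg hdeg in
lemma g_zero_one : ∀ (t : ℕ) (x : Fin N),
    0 ≤ ((Pm w ^ t) *ᵥ chi Cs) x ∧ ((Pm w ^ t) *ᵥ chi Cs) x ≤ 1 := by
  intro t
  induction t with
  | zero =>
    intro x
    simp only [pow_zero, Matrix.one_mulVec, chi]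
    split <;> norm_num
  | succ t ih =>
    intro x
    have hrw : ((Pm w ^ (t+1)) *ᵥ chi Cs) x = ∑ y, Pm w x y * ((Pm w ^ t) *ᵥ chi Cs) y := by
      rw [pow_succ', ← Matrix.mulVec_mulVec]
      simp [Matrix.mulVec, dotProduct]
    rw [hrw]
    constructor
    · exact Finset.sum_nonneg fun y _ =>
        mul_nonneg (Pm_nonneg w hnonneg hdeg x y) (ih y).1
    · calc ∑ y, Pm w x y * ((Pm w ^ t) *ᵥ chi Cs) y
          ≤ ∑ y, Pm w x y * 1 := Finset.sum_le_sum fun y _ =>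
            mul_le_mul_of_nonneg_left (ih y).2 (Pm_nonneg w hnonneg hdeg x y)
        _ = 1 := by simp [Pm_rowsum w hdeg x]

variable (α : ℝ) (hα : 0 ≤ α)
variable (hCs : ∀ y, y ∉ Cs → ∑ z ∈ Cs, w y z ≤ α * deg w y)

include hnonneg hdeg hα hCs in
/-- away from `Cs`, the chance of arriving in `Cs` in `t` steps is at most `t·α/2`. -/
lemma g_off : ∀ (t : ℕ) (y : Fin N), y ∉ Cs →
    ((Pm w ^ t) *ᵥ chi Cs) y ≤ t * (α / 2) := by
  intro t
  induction t with
  | zero =>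
    intro y hy
    simp [pow_zero, Matrix.one_mulVec, chi, if_neg hy]
  | succ t ih =>
    intro y hy
    have hrw : ((Pm w ^ (t+1)) *ᵥ chi Cs) y = ∑ z, Pm w y z * ((Pm w ^ t) *ᵥ chi Cs) z := by
      rw [pow_succ', ← Matrix.mulVec_mulVec]
      simp [Matrix.mulVec, dotProduct]
    rw [hrw, ← Finset.sum_add_sum_compl Cs (fun z => Pm w y z * ((Pm w ^ t) *ᵥ chi Cs) z)]
    have h1 : ∑ z ∈ Cs, Pm w y z * ((Pm w ^ t) *ᵥ chi Cs) z ≤ α / 2 := by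
      calc ∑ z ∈ Cs, Pm w y z * ((Pm w ^ t) *ᵥ chi Cs) z
          ≤ ∑ z ∈ Cs, Pm w y z * 1 := Finset.sum_le_sum fun z _ =>
            mul_le_mul_of_nonneg_left (g_zero_one hnonneg hdeg t z).2
              (Pm_nonneg w hnonneg hdeg y z)
        _ = ∑ z ∈ Cs, Pm w y z := by simp
        _ ≤ α / 2 := by
            have h2 := Pm_rowsum_into w hdeg hy
            have hy' := hdeg y
            have h3 := hCs y hy
            nlinarith [Finset.sum_nonneg (fun z (_ : z ∈ Cs) => Pm_nonneg w hnonneg hdeg y z)]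
    have h2 : ∑ z ∈ Csᶜ, Pm w y z * ((Pm w ^ t) *ᵥ chi Cs) z ≤ t * (α / 2) := by
      calc ∑ z ∈ Csᶜ, Pm w y z * ((Pm w ^ t) *ᵥ chi Cs) z
          ≤ ∑ z ∈ Csᶜ, Pm w y z * (t * (α / 2)) := Finset.sum_le_sum fun z hz =>
            mul_le_mul_of_nonneg_left (ih z (Finset.mem_compl.mp hz))
              (Pm_nonneg w hnonneg hdeg y z)
        _ = (∑ z ∈ Csᶜ, Pm w y z) * (t * (α / 2)) := by rw [← Finset.sum_mul]
        _ ≤ 1 * (t * (α / 2)) := by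
            apply mul_le_mul_of_nonneg_right _ (by positivity)
            calc ∑ z ∈ Csᶜ, Pm w y z ≤ ∑ z, Pm w y z := by
                  apply Finset.sum_le_sum_of_subset_of_nonneg (Finset.subset_univ _)
                  intro z _ _; exact Pm_nonneg w hnonneg hdeg y z
              _ = 1 := Pm_rowsum w hdeg y
        _ = t * (α / 2) := one_mul _
    push_cast
    linarith

include hsymm hnonneg hdeg in
lemma rho_nonneg : ∀ (s : ℕ) (x : Fin N), 0 ≤ rho w Ct s x := by
  intro s
  induction s with
  | zero => intro x; simp only [rho]; split; exacts [(hdeg x).le, le_refl 0]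
  | succ s ih =>
    intro x
    simp only [rho]
    split
    · rw [vecMul_apply]
      exact Finset.sum_nonneg fun y _ => mul_nonneg (ih y) (Pm_nonneg w hnonneg hdeg y x)
    · exact le_refl 0

include hsymm hnonneg hdeg in
lemma rho_le : ∀ (s : ℕ) (x : Fin N),
    rho w Ct s x ≤ (if x ∈ Ct then deg w x else 0) := by
  intro s
  induction s with
  | zero => intro x; simp [rho]
  | succ s ih =>
    intro x
    simp only [rho]
    split
    · calc (rho w Ct s ᵥ* Pm w) x
          = ∑ y, rho w Ct s y * Pm w y x := vecMul_apply _ _ x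
        _ ≤ ∑ y, deg w y * Pm w y x := by
            apply Finset.sum_le_sum
            intro y _
            apply mul_le_mul_of_nonneg_right _ (Pm_nonneg w hnonneg hdeg y x)
            calc rho w Ct s y ≤ (if y ∈ Ct then deg w y else 0) := ih y
              _ ≤ deg w y := by split; exacts [le_refl _, (hdeg y).le]
        _ = deg w x := deg_stationary w hsymm hdeg x
    · exact le_refl 0

include hsymm hnonneg hdeg in
/-- one-step image of `rho` is dominated by the image of `deg` restricted to `Ct`. -/
lemma rho_step_le (s : ℕ) (A : Finset (Fin N)) :
    ∑ x ∈ A, (rho w Ct s ᵥ* Pm w) x ≤ ∑ y ∈ Ct, deg w y * ∑ x ∈ A, Pm w y x := by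
  have key : ∀ x, (rho w Ct s ᵥ* Pm w) x ≤ ∑ y ∈ Ct, deg w y * Pm w y x := by
    intro x
    calc (rho w Ct s ᵥ* Pm w) x = ∑ y, rho w Ct s y * Pm w y x := vecMul_apply _ _ x
      _ ≤ ∑ y, (if y ∈ Ct then deg w y else 0) * Pm w y x := by
          apply Finset.sum_le_sum
          intro y _
          exact mul_le_mul_of_nonneg_right (rho_le hsymm hnonneg hdeg s y)
            (Pm_nonneg w hnonneg hdeg y x)
      _ = ∑ y ∈ Ct, deg w y * Pm w y x := by
          simp only [ite_mul, zero_mul]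
          rw [Finset.sum_ite_mem, Finset.univ_inter]
  calc ∑ x ∈ A, (rho w Ct s ᵥ* Pm w) x ≤ ∑ x ∈ A, ∑ y ∈ Ct, deg w y * Pm w y x :=
        Finset.sum_le_sum fun x _ => key x
    _ = ∑ y ∈ Ct, deg w y * ∑ x ∈ A, Pm w y x := by
        rw [Finset.sum_comm]
        exact Finset.sum_congr rfl fun y _ => by rw [Finset.mul_sum]

variable (hdisj : ∀ x ∈ Ct, x ∉ Cs)
variable (hCt : ∀ x ∈ Ct, ∑ y ∈ Ctᶜ, w x y ≤ α * deg w x)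

include hsymm hnonneg hdeg hα hdisj hCt hCs in
lemma key_induction : ∀ (t s : ℕ),
    rho w Ct s ⬝ᵥ ((Pm w ^ t) *ᵥ chi Cs) ≤
      t * ((∑ x ∈ Ct, ∑ z ∈ Cs, w x z) / 2) +
      t^2 * (α^2 * (∑ x ∈ Ct, deg w x) / 4) := by
  have hQ : 0 ≤ (∑ x ∈ Ct, ∑ z ∈ Cs, w x z) / 2 := by
    apply div_nonneg _ (by norm_num)
    exact Finset.sum_nonneg fun x _ => Finset.sum_nonneg fun z _ => hnonneg x z
  have hD : 0 ≤ ∑ x ∈ Ct, deg w x := Finset.sum_nonneg fun x _ => (hdeg x).le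
  have hR : 0 ≤ α^2 * (∑ x ∈ Ct, deg w x) / 4 := by positivity
  intro t
  induction t with
  | zero =>
    intro s
    simp only [pow_zero, Matrix.one_mulVec, Nat.cast_zero]
    have : rho w Ct s ⬝ᵥ chi Cs = 0 := by
      rw [dot_apply]
      apply Finset.sum_eq_zero
      intro x _
      by_cases hx : x ∈ Cs
      · have hx' : x ∉ Ct := fun h => hdisj x h hx
        have : rho w Ct s x = 0 := by
          cases s <;> simp [rho, if_neg hx']
        simp [this]
      · simp [chi, if_neg hx]
    rw [this]
    norm_num
  | succ t ih =>
    intro s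
    have hrw : rho w Ct s ⬝ᵥ ((Pm w ^ (t+1)) *ᵥ chi Cs) =
        (rho w Ct s ᵥ* Pm w) ⬝ᵥ ((Pm w ^ t) *ᵥ chi Cs) := by
      rw [pow_succ', ← Matrix.mulVec_mulVec, Matrix.dotProduct_mulVec]
    -- split the pushed-forward mass into the part inside Ct (= rho (s+1)) and the exit part
    set g := (Pm w ^ t) *ᵥ chi Cs with hg
    have hsplit : (rho w Ct s ᵥ* Pm w) ⬝ᵥ g =
        rho w Ct (s+1) ⬝ᵥ g + ∑ x, (if x ∈ Ct then 0 else (rho w Ct s ᵥ* Pm w) x) * g x := by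
      simp only [dot_apply, rho]
      rw [← Finset.sum_add_distrib]
      apply Finset.sum_congr rfl
      intro x _
      by_cases hx : x ∈ Ct <;> simp [hx]
    have hsigma_nonneg : ∀ x, 0 ≤ (if x ∈ Ct then 0 else (rho w Ct s ᵥ* Pm w) x) := by
      intro x
      split
      · exact le_refl 0
      · rw [vecMul_apply]
        exact Finset.sum_nonneg fun y _ =>
          mul_nonneg (rho_nonneg hsymm hnonneg hdeg s y) (Pm_nonneg w hnonneg hdeg y x)
    have hsigma_le : ∀ x, (if x ∈ Ct then 0 else (rho w Ct s ᵥ* Pm w) x) ≤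
        (rho w Ct s ᵥ* Pm w) x := by
      intro x
      split
      · rw [vecMul_apply]
        exact Finset.sum_nonneg fun y _ =>
          mul_nonneg (rho_nonneg hsymm hnonneg hdeg s y) (Pm_nonneg w hnonneg hdeg y x)
      · exact le_refl _
    -- bound the exit part
    have hexit : ∑ x, (if x ∈ Ct then 0 else (rho w Ct s ᵥ* Pm w) x) * g x ≤
        (∑ x ∈ Ct, ∑ z ∈ Cs, w x z) / 2 + t * (α/2) * (α/2 * ∑ x ∈ Ct, deg w x) := by
      set σ := fun x => (if x ∈ Ct then 0 else (rho w Ct s ᵥ* Pm w) x) with hσ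
      rw [← Finset.sum_add_sum_compl Cs (fun x => σ x * g x)]
      have hb1 : ∑ x ∈ Cs, σ x * g x ≤ (∑ x ∈ Ct, ∑ z ∈ Cs, w x z) / 2 := by
        calc ∑ x ∈ Cs, σ x * g x ≤ ∑ x ∈ Cs, σ x * 1 := Finset.sum_le_sum fun x _ =>
              mul_le_mul_of_nonneg_left (g_zero_one hnonneg hdeg t x).2 (hsigma_nonneg x)
          _ = ∑ x ∈ Cs, σ x := by simp
          _ ≤ ∑ x ∈ Cs, (rho w Ct s ᵥ* Pm w) x := Finset.sum_le_sum fun x _ => hsigma_le x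
          _ ≤ ∑ y ∈ Ct, deg w y * ∑ x ∈ Cs, Pm w y x := rho_step_le hsymm hnonneg hdeg s Cs
          _ = ∑ y ∈ Ct, (∑ x ∈ Cs, w y x) / 2 := Finset.sum_congr rfl fun y hy =>
              Pm_rowsum_into w hdeg (hdisj y hy)
          _ = (∑ x ∈ Ct, ∑ z ∈ Cs, w x z) / 2 := by rw [Finset.sum_div]
      have hb2 : ∑ x ∈ Csᶜ, σ x * g x ≤ t * (α/2) * (α/2 * ∑ x ∈ Ct, deg w x) := by
        calc ∑ x ∈ Csᶜ, σ x * g x ≤ ∑ x ∈ Csᶜ, σ x * (t * (α/2)) := by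
              apply Finset.sum_le_sum
              intro x hx
              exact mul_le_mul_of_nonneg_left
                (g_off hnonneg hdeg α hα hCs t x (Finset.mem_compl.mp hx)) (hsigma_nonneg x)
          _ = (∑ x ∈ Csᶜ, σ x) * (t * (α/2)) := by rw [← Finset.sum_mul]
          _ ≤ (∑ x ∈ Ctᶜ, (rho w Ct s ᵥ* Pm w) x) * (t * (α/2)) := by
              apply mul_le_mul_of_nonneg_right _ (by positivity)
              calc ∑ x ∈ Csᶜ, σ x ≤ ∑ x, σ x := by
                    apply Finset.sum_le_sum_of_subset_of_nonneg (Finset.subset_univ _)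
                    intro x _ _; exact hsigma_nonneg x
                _ = ∑ x ∈ Ctᶜ, σ x := by
                    rw [← Finset.sum_add_sum_compl Ct (fun x => σ x)]
                    have : ∑ x ∈ Ct, σ x = 0 := Finset.sum_eq_zero fun x hx => by
                      simp [hσ, if_pos hx]
                    rw [this, zero_add]
                _ ≤ ∑ x ∈ Ctᶜ, (rho w Ct s ᵥ* Pm w) x :=
                    Finset.sum_le_sum fun x _ => hsigma_le x
          _ ≤ (α/2 * ∑ x ∈ Ct, deg w x) * (t * (α/2)) := by
              apply mul_le_mul_of_nonneg_right _ (by positivity)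
              calc ∑ x ∈ Ctᶜ, (rho w Ct s ᵥ* Pm w) x
                  ≤ ∑ y ∈ Ct, deg w y * ∑ x ∈ Ctᶜ, Pm w y x :=
                    rho_step_le hsymm hnonneg hdeg s Ctᶜ
                _ = ∑ y ∈ Ct, (∑ x ∈ Ctᶜ, w y x) / 2 := Finset.sum_congr rfl fun y hy =>
                    Pm_rowsum_into w hdeg (by simpa using hy)
                _ ≤ ∑ y ∈ Ct, α * deg w y / 2 := Finset.sum_le_sum fun y hy => by
                    have := hCt y hy; linarith
                _ = α/2 * ∑ x ∈ Ct, deg w x := by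
                    rw [Finset.mul_sum]; exact Finset.sum_congr rfl fun y _ => by ring
          _ = t * (α/2) * (α/2 * ∑ x ∈ Ct, deg w x) := by ring
      linarith
    rw [hrw, hsplit]
    have := ih (s+1)
    push_cast
    nlinarith [this, hα, hD]

include hsymm hnonneg hdeg hα hdisj hCt hCs in
theorem core_bound (t : ℕ) :
    ∑ x ∈ Ct, deg w x * ((Pm w ^ t) *ᵥ chi Cs) x ≤
      t * (∑ x ∈ Ct, ∑ z ∈ Cs, w x z) + t^2 * α^2 * (∑ x ∈ Ct, deg w x) := by
  have h0 : ∑ x ∈ Ct, deg w x * ((Pm w ^ t) *ᵥ chi Cs) x =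
      rho w Ct 0 ⬝ᵥ ((Pm w ^ t) *ᵥ chi Cs) := by
    simp only [dot_apply, rho]
    rw [← Finset.sum_add_sum_compl Ct
      (fun x => (if x ∈ Ct then deg w x else 0) * ((Pm w ^ t) *ᵥ chi Cs) x)]
    have h1 : ∑ x ∈ Ctᶜ, (if x ∈ Ct then deg w x else 0) * ((Pm w ^ t) *ᵥ chi Cs) x = 0 :=
      Finset.sum_eq_zero fun x hx => by
        rw [if_neg (Finset.mem_compl.mp hx), zero_mul]
    rw [h1, add_zero]
    exact Finset.sum_congr rfl fun x hx => by rw [if_pos hx]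
  rw [h0]
  have := key_induction hsymm hnonneg hdeg α hα hCs hdisj hCt t 0
  have hW : 0 ≤ ∑ x ∈ Ct, ∑ z ∈ Cs, w x z :=
    Finset.sum_nonneg fun x _ => Finset.sum_nonneg fun z _ => hnonneg x z
  have hD : 0 ≤ ∑ x ∈ Ct, deg w x := Finset.sum_nonneg fun x _ => (hdeg x).le
  have ht : (0:ℝ) ≤ t := Nat.cast_nonneg t
  nlinarith [mul_nonneg ht hW,
    mul_nonneg (mul_nonneg (sq_nonneg (t:ℝ)) (sq_nonneg α)) hD]

end Core

/-- conjugation: `lazyA = D^{1/2} Pm D^{-1/2}` in vector form. -/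
lemma conj (w : Fin N → Fin N → ℝ) (hnonneg : ∀ x x', 0 ≤ w x x')
    (hdeg : ∀ x, 0 < deg w x) (A : Finset (Fin N)) : ∀ (t : ℕ) (x : Fin N),
    ((lazyA w ^ t) *ᵥ hvec w A) x = Real.sqrt (deg w x) * ((Pm w ^ t) *ᵥ chi A) x := by
  intro t
  induction t with
  | zero =>
    intro x
    simp only [pow_zero, Matrix.one_mulVec, hvec, chi]
    split <;> simp
  | succ t ih =>
    intro x
    have hstep : ∀ y, lazyA w x y * Real.sqrt (deg w y) = Real.sqrt (deg w x) * Pm w x y := by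
      intro y
      have hx := hdeg x
      have hy := hdeg y
      by_cases hxy : x = y
      · subst hxy
        have hsx : Real.sqrt (deg w x) * Real.sqrt (deg w x) = deg w x :=
          Real.mul_self_sqrt hx.le
        have hsx0 : 0 < Real.sqrt (deg w x) := Real.sqrt_pos.mpr hx
        simp only [lazyA, Pm_apply, Matrix.add_apply, Matrix.smul_apply, Matrix.one_apply,
          nadj, Matrix.of_apply, smul_eq_mul, if_pos rfl, Real.sqrt_mul hx.le]
        set a := Real.sqrt (deg w x) with ha
        rw [← hsx]
        have ha0 : a ≠ 0 := hsx0.ne'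
        field_simp
        simp only [↓reduceIte]
        ring
      · have hsx : Real.sqrt (deg w x) * Real.sqrt (deg w x) = deg w x :=
          Real.mul_self_sqrt hx.le
        have hsx0 : 0 < Real.sqrt (deg w x) := Real.sqrt_pos.mpr hx
        have hsy0 : 0 < Real.sqrt (deg w y) := Real.sqrt_pos.mpr hy
        simp only [lazyA, Pm_apply, Matrix.add_apply, Matrix.smul_apply, Matrix.one_apply,
          nadj, Matrix.of_apply, smul_eq_mul, if_neg hxy, Real.sqrt_mul hx.le]
        set a := Real.sqrt (deg w x) with ha
        set b := Real.sqrt (deg w y) with hb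
        rw [← hsx]
        have ha0 : a ≠ 0 := hsx0.ne'
        have hb0 : b ≠ 0 := hsy0.ne'
        field_simp
        ring
    have hrw1 : ((lazyA w ^ (t+1)) *ᵥ hvec w A) x =
        ∑ y, lazyA w x y * ((lazyA w ^ t) *ᵥ hvec w A) y := by
      rw [pow_succ', ← Matrix.mulVec_mulVec]
      simp [Matrix.mulVec, dotProduct]
    have hrw2 : ((Pm w ^ (t+1)) *ᵥ chi A) x =
        ∑ y, Pm w x y * ((Pm w ^ t) *ᵥ chi A) y := by
      rw [pow_succ', ← Matrix.mulVec_mulVec]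
      simp [Matrix.mulVec, dotProduct]
    rw [hrw1, hrw2, Finset.mul_sum]
    apply Finset.sum_congr rfl
    intro y _
    rw [ih y, ← mul_assoc, hstep y, mul_assoc]

end Stmt13Aux


open Stmt13Aux in
/-- Upper bound on the probability that a lazy random walk
started in `T_i` arrives in `S_j` for `j ≠ i`. -/
theorem stmt13 {N m r : ℕ} (w : Fin N → Fin N → ℝ)
    (hsymm : ∀ x x', w x x' = w x' x)
    (hnonneg : ∀ x x', 0 ≤ w x x')
    (hsum : ∑ x, ∑ x', w x x' = 1)
    (hdeg : ∀ x, 0 < deg w x)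
    (C : Fin m → Finset (Fin N))
    (hpart : ∀ x : Fin N, ∃! i : Fin m, x ∈ C i)
    (hne : ∀ i : Fin m, (C i).Nonempty)
    (α : ℝ) (hα0 : 0 < α) (hα1 : α < 1)
    (hexp : ∀ i : Fin m, ∀ x ∈ C i, (∑ x' ∈ (C i)ᶜ, w x x') ≤ α * deg w x)
    (hrm : 2 * r ≤ m)
    (S T : Fin r → Finset (Fin N))
    (hS : ∀ i : Fin r, S i = C ⟨i.1, by have := i.isLt; omega⟩)
    (hT : ∀ i : Fin r, T i = C ⟨r + i.1, by have := i.isLt; omega⟩)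
    (i j : Fin r) (hij : i ≠ j) :
    ∀ t : ℕ, (t : ℝ) ≤ 1 / α →
      (∑ x ∈ T i, Real.sqrt (deg w x) * ((lazyA w ^ t) *ᵥ hvec w (S j)) x) ≤
        ((t : ℝ) ^ 2 * α ^ 2 +
            (t : ℝ) * ((∑ x ∈ T i, ∑ x' ∈ S j, w x x') / (∑ x ∈ T i, deg w x))) *
          (∑ x ∈ T i, deg w x) := by
  intro t _
  have hTi : T i = C ⟨r + i.1, by have := i.isLt; omega⟩ := hT i
  have hSj : S j = C ⟨j.1, by have := j.isLt; omega⟩ := hS j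
  have hdisj : ∀ x ∈ T i, x ∉ S j := by
    intro x hx hx'
    rw [hTi] at hx
    rw [hSj] at hx'
    obtain ⟨k, _, huniq⟩ := hpart x
    have h1 := huniq _ hx
    have h2 := huniq _ hx'
    have h3 : r + i.1 = j.1 := congrArg Fin.val (h1.trans h2.symm)
    have := j.isLt
    omega
  have hCt : ∀ x ∈ T i, ∑ y ∈ (T i)ᶜ, w x y ≤ α * deg w x := by
    rw [hTi]; exact hexp _
  have hCs : ∀ y, y ∉ S j → ∑ z ∈ S j, w y z ≤ α * deg w y := by
    intro y hy
    obtain ⟨k, hk, _⟩ := hpart y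
    have hsub : S j ⊆ (C k)ᶜ := by
      intro z hz
      rw [Finset.mem_compl]
      intro hzk
      obtain ⟨k', _, huniq'⟩ := hpart z
      have e1 := huniq' _ hzk
      have e2 := huniq' _ (by rw [hSj] at hz; exact hz)
      rw [e1.trans e2.symm] at hk
      rw [← hSj] at hk
      exact hy hk
    calc ∑ z ∈ S j, w y z ≤ ∑ z ∈ (C k)ᶜ, w y z :=
          Finset.sum_le_sum_of_subset_of_nonneg hsub (fun z _ _ => hnonneg y z)
      _ ≤ α * deg w y := hexp k y hk
  have hLHS : ∑ x ∈ T i, Real.sqrt (deg w x) * ((lazyA w ^ t) *ᵥ hvec w (S j)) x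
      = ∑ x ∈ T i, deg w x * ((Stmt13Aux.Pm w ^ t) *ᵥ Stmt13Aux.chi (S j)) x := by
    apply Finset.sum_congr rfl
    intro x _
    rw [Stmt13Aux.conj w hnonneg hdeg (S j) t x, ← mul_assoc, Real.mul_self_sqrt (hdeg x).le]
  have hcore := Stmt13Aux.core_bound (Ct := T i) (Cs := S j)
    hsymm hnonneg hdeg α hα0.le hCs hdisj hCt t
  have hD : 0 < ∑ x ∈ T i, deg w x :=
    Finset.sum_pos (fun x _ => hdeg x) (by rw [hTi]; exact hne _)
  have hexp2 : ((t:ℝ)^2 * α^2 + (t:ℝ) * ((∑ x ∈ T i, ∑ x' ∈ S j, w x x') /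
        (∑ x ∈ T i, deg w x))) * (∑ x ∈ T i, deg w x)
      = (t:ℝ) * (∑ x ∈ T i, ∑ x' ∈ S j, w x x') +
        (t:ℝ)^2 * α^2 * (∑ x ∈ T i, deg w x) := by
    field_simp
    ring
  rw [hLHS, hexp2]
  exact hcore
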